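/- Let A be the n-by-n weighted shift matrix with weights a_1, …, a_{n−1}, 0 and B the n-by-n weighted shift matrix with weights b_1, …, b_{n−1}, 0, where all a_i and b_j are strictly positive real numbers, and suppose A ≠ B (i.e., a_j ≠ b_j for some j). If U is an n-by-n complex matrix such that A^k·U = U·B^k and (A*)^k·U = U·(B*)^k for every integer k ≥ 0, then U = 0. -/

import Mathlib

open Matrix

def wsMatrix {n : ℕ} (a : Fin n → ℂ) : Matrix (Fin n) (Fin n) ℂ :=
  fun i j => if (j : ℕ) = ((i : ℕ) + 1) % n then a i else 0

def UnitarilyEquiv {n : ℕ} (A B : Matrix (Fin n) (Fin n) ℂ) : Prop :=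
  ∃ U : Matrix (Fin n) (Fin n) ℂ, U ∈ Matrix.unitaryGroup (Fin n) ℂ ∧ B = Uᴴ * A * U

section Aux
variable {n : ℕ} [NeZero n]

lemma val_succ (i : Fin n) : ((i + 1 : Fin n) : ℕ) = ((i : ℕ) + 1) % n := by
  rw [Fin.val_add, Fin.val_one']
  conv_rhs => rw [Nat.add_mod]
  rw [Nat.mod_eq_of_lt i.isLt]

lemma ws_apply (c : Fin n → ℂ) (i j : Fin n) :
    wsMatrix c i j = if j = i + 1 then c i else 0 := by
  have h : ((j : ℕ) = ((i : ℕ) + 1) % n) ↔ j = i + 1 := by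
    rw [Fin.ext_iff, val_succ]
  simp only [wsMatrix]
  rw [if_congr h rfl rfl]

lemma ws_mul (c : Fin n → ℂ) (M : Matrix (Fin n) (Fin n) ℂ) (i j : Fin n) :
    (wsMatrix c * M) i j = c i * M (i + 1) j := by
  rw [Matrix.mul_apply]
  simp_rw [ws_apply, ite_mul, zero_mul]
  simp

lemma mul_ws (c : Fin n → ℂ) (M : Matrix (Fin n) (Fin n) ℂ) (i j : Fin n) :
    (M * wsMatrix c) i j = M i (j - 1) * c (j - 1) := by
  rw [Matrix.mul_apply]
  have key : ∀ k : Fin n, (j = k + 1) ↔ (k = j - 1) := by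
    intro k
    constructor
    · intro h; rw [h]; simp
    · intro h; rw [h]; simp
  simp_rw [ws_apply, key, mul_ite, mul_zero]
  simp

lemma ws_ct_apply (c : Fin n → ℂ) (i j : Fin n) :
    (wsMatrix c)ᴴ i j = if i = j + 1 then star (c j) else 0 := by
  rw [Matrix.conjTranspose_apply, ws_apply]
  split_ifs <;> simp

lemma ws_ct_mul (c : Fin n → ℂ) (M : Matrix (Fin n) (Fin n) ℂ) (i j : Fin n) :
    ((wsMatrix c)ᴴ * M) i j = star (c (i - 1)) * M (i - 1) j := by
  rw [Matrix.mul_apply]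
  have key : ∀ k : Fin n, (i = k + 1) ↔ (k = i - 1) := by
    intro k
    constructor
    · intro h; rw [h]; simp
    · intro h; rw [h]; simp
  simp_rw [ws_ct_apply, key, ite_mul, zero_mul]
  simp

lemma mul_ws_ct (c : Fin n → ℂ) (M : Matrix (Fin n) (Fin n) ℂ) (i j : Fin n) :
    (M * (wsMatrix c)ᴴ) i j = M i (j + 1) * star (c j) := by
  rw [Matrix.mul_apply]
  simp_rw [ws_ct_apply, mul_ite, mul_zero]
  simp

lemma fin_sub_one_val (i : Fin n) :
    ((1 ≤ (i : ℕ)) ∧ ((i - 1 : Fin n) : ℕ) = (i : ℕ) - 1)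
    ∨ ((i : ℕ) = 0 ∧ ((i - 1 : Fin n) : ℕ) = n - 1) := by
  have h1 : ((i - 1) + 1 : Fin n) = i := sub_add_cancel i 1
  have h2 := val_succ (i - 1)
  rw [h1] at h2
  have hv : ((i - 1 : Fin n) : ℕ) < n := (i - 1).isLt
  rcases Nat.lt_or_ge (((i - 1 : Fin n) : ℕ) + 1) n with h | h
  · left
    rw [Nat.mod_eq_of_lt h] at h2
    omega
  · right
    have : ((i - 1 : Fin n) : ℕ) + 1 = n := by omega
    rw [this, Nat.mod_self] at h2
    omega

end Aux

theorem stmt8 (n : ℕ) (hn : 2 ≤ n)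
    (a b : Fin n → ℝ)
    (ha : ∀ i : Fin n, (i : ℕ) + 1 < n → 0 < a i)
    (hb : ∀ j : Fin n, (j : ℕ) + 1 < n → 0 < b j)
    (A B : Matrix (Fin n) (Fin n) ℂ)
    (hA : A = wsMatrix fun i => if (i : ℕ) + 1 < n then (a i : ℂ) else 0)
    (hB : B = wsMatrix fun j => if (j : ℕ) + 1 < n then (b j : ℂ) else 0)
    (hAB : A ≠ B)
    (U : Matrix (Fin n) (Fin n) ℂ)
    (hU1 : ∀ k : ℕ, A ^ k * U = U * B ^ k)
    (hU2 : ∀ k : ℕ, Aᴴ ^ k * U = U * Bᴴ ^ k) :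
    U = 0 := by
  haveI : NeZero n := ⟨by omega⟩
  by_contra hU
  -- real weights
  set α : Fin n → ℝ := fun i => if (i : ℕ) + 1 < n then a i else 0 with hαdef
  set β : Fin n → ℝ := fun i => if (i : ℕ) + 1 < n then b i else 0 with hβdef
  have hαnn : ∀ i, 0 ≤ α i := by
    intro i; simp only [hαdef]; split_ifs with h
    · exact le_of_lt (ha i h)
    · exact le_refl 0
  have hβnn : ∀ i, 0 ≤ β i := by
    intro i; simp only [hβdef]; split_ifs with h
    · exact le_of_lt (hb i h)
    · exact le_refl 0
  have hαpos : ∀ i : Fin n, (i : ℕ) + 1 < n → 0 < α i := by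
    intro i h; simp only [hαdef]; rw [if_pos h]; exact ha i h
  have hβpos : ∀ i : Fin n, (i : ℕ) + 1 < n → 0 < β i := by
    intro i h; simp only [hβdef]; rw [if_pos h]; exact hb i h
  have hαzero : ∀ i : Fin n, ¬ ((i : ℕ) + 1 < n) → α i = 0 := by
    intro i h; simp only [hαdef]; rw [if_neg h]
  have hβzero : ∀ i : Fin n, ¬ ((i : ℕ) + 1 < n) → β i = 0 := by
    intro i h; simp only [hβdef]; rw [if_neg h]
  have hA' : A = wsMatrix (fun i => ((α i : ℝ) : ℂ)) := by
    have hw : (fun i : Fin n => if (i : ℕ) + 1 < n then (a i : ℂ) else 0)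
        = fun i => ((α i : ℝ) : ℂ) := by
      funext i; simp only [hαdef]; split_ifs <;> simp
    rw [hA, hw]
  have hB' : B = wsMatrix (fun i => ((β i : ℝ) : ℂ)) := by
    have hw : (fun i : Fin n => if (i : ℕ) + 1 < n then (b i : ℂ) else 0)
        = fun i => ((β i : ℝ) : ℂ) := by
      funext i; simp only [hβdef]; split_ifs <;> simp
    rw [hB, hw]
  have hAU : A * U = U * B := by have := hU1 1; simpa using this
  have hAU2 : Aᴴ * U = U * Bᴴ := by have := hU2 1; simpa using this
  -- entrywise relations
  have R1 : ∀ i j : Fin n, (α i : ℂ) * U (i + 1) j = U i (j - 1) * (β (j - 1) : ℂ) := by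
    intro i j
    have h := Matrix.ext_iff.2 hAU i j
    rw [hA'] at h; rw [hB'] at h
    rw [ws_mul, mul_ws] at h
    exact h
  have R2 : ∀ i j : Fin n, (α (i - 1) : ℂ) * U (i - 1) j = U i (j + 1) * (β j : ℂ) := by
    intro i j
    have h := Matrix.ext_iff.2 hAU2 i j
    rw [hA'] at h; rw [hB'] at h
    rw [ws_ct_mul, mul_ws_ct] at h
    simpa using h
  -- diagonal relations
  have h3m : Aᴴ * (A * U) = (U * Bᴴ) * B := by
    rw [hAU, ← Matrix.mul_assoc, hAU2]
  have h4m : A * (Aᴴ * U) = (U * B) * Bᴴ := by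
    rw [hAU2, ← Matrix.mul_assoc, hAU]
  have sq_aux : ∀ (x y : ℝ), 0 ≤ x → 0 ≤ y → x ^ 2 = y ^ 2 → x = y := by
    intro x y hx hy h
    have h' : (x - y) * (x + y) = 0 := by ring_nf; nlinarith
    rcases mul_eq_zero.mp h' with h'' | h''
    · linarith
    · linarith
  have R4 : ∀ i j : Fin n, U i j ≠ 0 → α i = β j := by
    intro i j hij
    have h := Matrix.ext_iff.2 h4m i j
    rw [hA'] at h; rw [hB'] at h
    rw [ws_mul, ws_ct_mul, mul_ws_ct, mul_ws] at h
    simp only [add_sub_cancel_right, Complex.star_def, Complex.conj_ofReal] at h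
    have h2 : ((α i ^ 2 : ℝ) : ℂ) * U i j = ((β j ^ 2 : ℝ) : ℂ) * U i j := by
      push_cast
      ring_nf
      ring_nf at h
      linear_combination h
    have h3 : ((α i ^ 2 : ℝ) : ℂ) = ((β j ^ 2 : ℝ) : ℂ) := mul_right_cancel₀ hij h2
    exact sq_aux _ _ (hαnn i) (hβnn j) (by exact_mod_cast h3)
  have R3 : ∀ i j : Fin n, U i j ≠ 0 → α (i - 1) = β (j - 1) := by
    intro i j hij
    have h := Matrix.ext_iff.2 h3m i j
    rw [hA'] at h; rw [hB'] at h
    rw [ws_ct_mul, ws_mul, mul_ws, mul_ws_ct] at h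
    simp only [sub_add_cancel, Complex.star_def, Complex.conj_ofReal] at h
    have h2 : ((α (i - 1) ^ 2 : ℝ) : ℂ) * U i j = ((β (j - 1) ^ 2 : ℝ) : ℂ) * U i j := by
      push_cast
      ring_nf
      ring_nf at h
      linear_combination h
    have h3 : ((α (i - 1) ^ 2 : ℝ) : ℂ) = ((β (j - 1) ^ 2 : ℝ) : ℂ) := mul_right_cancel₀ hij h2
    exact sq_aux _ _ (hαnn _) (hβnn _) (by exact_mod_cast h3)
  -- Step 1: nonzero entries lie on the diagonal
  have diag : ∀ m : ℕ, ∀ i j : Fin n, (i : ℕ) = m → U i j ≠ 0 → i = j := by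
    intro m
    induction m with
    | zero =>
      intro i j hi hij
      have h3 := R3 i j hij
      have hi1 : ((i - 1 : Fin n) : ℕ) = n - 1 := by
        rcases fin_sub_one_val i with ⟨h, _⟩ | ⟨_, h⟩
        · omega
        · exact h
      have hα0 : α (i - 1) = 0 := hαzero _ (by omega)
      have hβ0 : β (j - 1) = 0 := by rw [← h3, hα0]
      have hj1 : ((j - 1 : Fin n) : ℕ) = n - 1 := by
        by_contra hc
        have : ((j - 1 : Fin n) : ℕ) + 1 < n := by
          have := (j - 1 : Fin n).isLt; omega
        exact absurd hβ0 (ne_of_gt (hβpos _ this))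
      have hsub : (i - 1 : Fin n) = j - 1 := Fin.ext (by rw [hi1, hj1])
      have := congrArg (· + 1) hsub
      simpa [sub_add_cancel] using this
    | succ m ih =>
      intro i j hi hij
      have h3 := R3 i j hij
      have hi1 : ((i - 1 : Fin n) : ℕ) = m := by
        rcases fin_sub_one_val i with ⟨h, h'⟩ | ⟨h, _⟩
        · omega
        · omega
      have hαp : 0 < α (i - 1) := hαpos _ (by have := i.isLt; omega)
      have hβp : 0 < β (j - 1) := by rw [← h3]; exact hαp
      have hj1 : 1 ≤ (j : ℕ) := by
        rcases fin_sub_one_val j with ⟨h, _⟩ | ⟨h, h'⟩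
        · exact h
        · exfalso
          have : ¬ (((j - 1 : Fin n) : ℕ) + 1 < n) := by omega
          exact absurd (hβzero _ this) (ne_of_gt hβp)
      -- use R2 at (i, j - 1)
      have hr := R2 i (j - 1)
      rw [sub_add_cancel] at hr
      have hrhs : U i j * (β (j - 1) : ℂ) ≠ 0 :=
        mul_ne_zero hij (Complex.ofReal_ne_zero.mpr (ne_of_gt hβp))
      rw [← hr] at hrhs
      have hU' : U (i - 1) (j - 1) ≠ 0 := by
        intro h0; rw [h0, mul_zero] at hrhs; exact hrhs rfl
      have := ih (i - 1) (j - 1) hi1 hU'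
      have h5 := congrArg (· + 1) this
      simpa [sub_add_cancel] using h5
  -- Step 2: some diagonal entry is nonzero
  obtain ⟨i0, j0, h0⟩ : ∃ i j : Fin n, U i j ≠ 0 := by
    by_contra h
    push_neg at h
    exact hU (by ext i j; simpa using h i j)
  have hdiag0 : U i0 i0 ≠ 0 := by
    have := diag (i0 : ℕ) i0 j0 rfl h0
    rwa [← this] at h0
  -- Step 3: U 0 0 ≠ 0 (downward propagation)
  have down : ∀ m : ℕ, ∀ i : Fin n, (i : ℕ) = m → U i i ≠ 0 → U 0 0 ≠ 0 := by
    intro m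
    induction m with
    | zero =>
      intro i hi hii
      have : i = 0 := Fin.ext (by simpa using hi)
      rwa [this] at hii
    | succ m ih =>
      intro i hi hii
      have hi1 : ((i - 1 : Fin n) : ℕ) = m := by
        rcases fin_sub_one_val i with ⟨h, h'⟩ | ⟨h, _⟩ <;> omega
      have hαp : 0 < α (i - 1) := hαpos _ (by have := i.isLt; omega)
      have hβp : 0 < β (i - 1) := hβpos _ (by have := i.isLt; omega)
      have hr := R2 i (i - 1)
      rw [sub_add_cancel] at hr
      have hrhs : U i i * (β (i - 1) : ℂ) ≠ 0 :=
        mul_ne_zero hii (Complex.ofReal_ne_zero.mpr (ne_of_gt hβp))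
      rw [← hr] at hrhs
      have hU' : U (i - 1) (i - 1) ≠ 0 := by
        intro h0; rw [h0, mul_zero] at hrhs; exact hrhs rfl
      exact ih (i - 1) hi1 hU'
  have h00 : U 0 0 ≠ 0 := down (i0 : ℕ) i0 rfl hdiag0
  -- Step 4: all diagonal entries are nonzero (upward propagation)
  have up : ∀ m : ℕ, ∀ i : Fin n, (i : ℕ) = m → U i i ≠ 0 := by
    intro m
    induction m with
    | zero =>
      intro i hi
      have : i = 0 := Fin.ext (by simpa using hi)
      rwa [this]
    | succ m ih =>
      intro i hi
      have hi1 : ((i - 1 : Fin n) : ℕ) = m := by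
        rcases fin_sub_one_val i with ⟨h, h'⟩ | ⟨h, _⟩ <;> omega
      have hprev : U (i - 1) (i - 1) ≠ 0 := ih (i - 1) hi1
      have hαp : 0 < α (i - 1) := hαpos _ (by have := i.isLt; omega)
      have hβp : 0 < β (i - 1) := hβpos _ (by have := i.isLt; omega)
      have hr := R1 (i - 1) i
      rw [sub_add_cancel] at hr
      have hlhs : (α (i - 1) : ℂ) * U i i ≠ 0 := by
        rw [hr]
        exact mul_ne_zero hprev (Complex.ofReal_ne_zero.mpr (ne_of_gt hβp))
      intro h0; rw [h0, mul_zero] at hlhs; exact hlhs rfl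
  -- Step 5: all weights agree, so A = B, contradiction
  have hweights : ∀ i : Fin n, α i = β i := fun i => R4 i i (up (i : ℕ) i rfl)
  apply hAB
  have hw : (fun i : Fin n => ((α i : ℝ) : ℂ)) = fun i => ((β i : ℝ) : ℂ) := by
    funext i; rw [hweights i]
  rw [hA', hB', hw]
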